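/- Let r ≥ 3 and let W be the dihedral group of order 2r, with elements the rotations ρ₀,…,ρ_{r−1} and the reflections t₀,…,t_{r−1}, multiplication satisfying tᵢtⱼ = ρ_{i−j} and ρᵢtⱼ = t_{i+j} (indices modulo r). The reflections of W are exactly t₀,…,t_{r−1} and its Coxeter elements are the two rotations ρ₁ and ρ_{−1}. Let ω₀, ω₁ ∈ ℂ and define the weight w(t₀) := ω₀ and w(tᵢ) := ω₁ for i ≠ 0 (the weight system of the parabolic tower {1} ≤ {1, t₀} ≤ W). Then for every integer ℓ ≥ 0: Σ w(τ₁)·w(τ₂)⋯w(τ_ℓ), summed over all tuples (τ₁,…,τ_ℓ, c) with each τⱼ a reflection, c ∈ {ρ₁, ρ_{−1}}, and τ₁τ₂⋯τ_ℓ = c, equals (1/r)·(1 + (−1)^ℓ)·((ω₀ + (r−1)ω₁)^ℓ − (ω₀ − ω₁)^ℓ). (This is the coefficientwise form of the identity F(t) = (1/r)·e^{t(ω₀+(r−1)ω₁)}·(1 − e^{−trω₁})·(1 − e^{−t(2ω₀+(r−2)ω₁)}), i.e. the main product formula for the dihedral groups I₂(r) = G(r,r,2).) -/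

import Mathlib

open scoped BigOperators

noncomputable section

open DihedralGroup

namespace DihedralProofAux

variable {r : ℕ}

/-- Extract the rotation index of an element of the dihedral group. -/
def unsr : DihedralGroup r → ZMod r
  | DihedralGroup.r i => i
  | DihedralGroup.sr i => i

/-- Alternating sum of a tuple in `ZMod r`. -/
def alt (ℓ : ℕ) (i : Fin ℓ → ZMod r) : ZMod r := ∑ j : Fin ℓ, (-1 : ZMod r) ^ (j : ℕ) * i j

lemma alt_succ (ℓ : ℕ) (i : Fin (ℓ+1) → ZMod r) :
    alt (ℓ+1) i = i 0 - alt ℓ (fun j => i j.succ) := by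
  simp only [alt, Fin.sum_univ_succ, Fin.val_zero, pow_zero, one_mul, Fin.val_succ, pow_succ,
    sub_eq_add_neg, ← Finset.sum_neg_distrib]
  congr 1
  refine Finset.sum_congr rfl fun j _ => by ring

lemma prod_sr_eq (ℓ : ℕ) : ∀ i : Fin ℓ → ZMod r,
    (List.ofFn fun j => sr (i j)).prod =
      if Even ℓ then DihedralGroup.r (-(alt ℓ i)) else DihedralGroup.sr (alt ℓ i) := by
  induction ℓ with
  | zero => intro i; simp [alt]
  | succ n ih =>
    intro i
    rw [List.ofFn_succ, List.prod_cons, ih (fun j => i j.succ), alt_succ]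
    by_cases hn : Even n
    · simp only [hn, if_true, Nat.even_add_one, not_true, if_false, sr_mul_r]
      congr 1
      ring
    · simp only [hn, if_false, Nat.even_add_one, not_false_iff, if_true, sr_mul_sr]
      congr 1
      ring

lemma conv_eval (r : ℕ) [NeZero r] (hr : 3 ≤ r) (ω₀ ω₁ : ℂ) :
    ∀ (ℓ : ℕ) (s : ZMod r),
    (∑ i : Fin ℓ → ZMod r, if (∑ j : Fin ℓ, i j) = s
        then ∏ j : Fin ℓ, (if i j = 0 then ω₀ else ω₁) else 0)
      = if s = 0 then ((ω₀ + ((r:ℂ)-1)*ω₁)^ℓ + ((r:ℂ)-1)*(ω₀-ω₁)^ℓ)/r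
        else ((ω₀ + ((r:ℂ)-1)*ω₁)^ℓ - (ω₀-ω₁)^ℓ)/r := by
  have hr0 : (r : ℂ) ≠ 0 := Nat.cast_ne_zero.mpr (NeZero.ne r)
  intro ℓ
  induction ℓ with
  | zero =>
    intro s
    by_cases hs : s = 0
    · simp [hs]
    · simp [hs, Ne.symm hs]
  | succ n ih =>
    intro s
    have step : (∑ i : Fin (n+1) → ZMod r, if (∑ j : Fin (n+1), i j) = s
        then ∏ j : Fin (n+1), (if i j = 0 then ω₀ else ω₁) else 0)
        = ∑ p : ZMod r × (Fin n → ZMod r),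
          if p.1 + ∑ j : Fin n, p.2 j = s
            then (if p.1 = 0 then ω₀ else ω₁) * ∏ j : Fin n, (if p.2 j = 0 then ω₀ else ω₁)
            else 0 := by
      rw [← Fintype.sum_equiv (Fin.consEquiv fun _ : Fin (n+1) => ZMod r)
        (fun p : ZMod r × (Fin n → ZMod r) =>
          if p.1 + ∑ j : Fin n, p.2 j = s
            then (if p.1 = 0 then ω₀ else ω₁) * ∏ j : Fin n, (if p.2 j = 0 then ω₀ else ω₁)
            else 0)
        _ (fun p => by
          simp [Fin.consEquiv, Fin.sum_univ_succ, Fin.prod_univ_succ])]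
    rw [step, Fintype.sum_prod_type]
    have inner : ∀ x : ZMod r,
        (∑ i : Fin n → ZMod r, if x + ∑ j : Fin n, i j = s
            then (if x = 0 then ω₀ else ω₁) * ∏ j : Fin n, (if i j = 0 then ω₀ else ω₁) else 0)
          = (if x = 0 then ω₀ else ω₁) *
            (if s - x = 0 then ((ω₀ + ((r:ℂ)-1)*ω₁)^n + ((r:ℂ)-1)*(ω₀-ω₁)^n)/r
              else ((ω₀ + ((r:ℂ)-1)*ω₁)^n - (ω₀-ω₁)^n)/r) := by
      intro x
      rw [← ih (s - x), Finset.mul_sum]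
      refine Finset.sum_congr rfl fun i _ => ?_
      have hc : (x + ∑ j : Fin n, i j = s) ↔ (∑ j : Fin n, i j = s - x) := by
        rw [eq_sub_iff_add_eq, add_comm]
      rw [mul_ite, mul_zero]
      simp [hc]
    simp only [inner]
    have hcardU : (Finset.univ : Finset (ZMod r)).card = r := by simp [ZMod.card]
    rw [← Finset.sum_erase_add _ _ (Finset.mem_univ (0 : ZMod r))]
    by_cases hs : s = 0
    · have h1 : (∑ x ∈ Finset.univ.erase (0 : ZMod r),
          (if x = 0 then ω₀ else ω₁) *
            (if s - x = 0 then ((ω₀ + ((r:ℂ)-1)*ω₁)^n + ((r:ℂ)-1)*(ω₀-ω₁)^n)/r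
              else ((ω₀ + ((r:ℂ)-1)*ω₁)^n - (ω₀-ω₁)^n)/r))
          = ((r : ℂ) - 1) * (ω₁ * (((ω₀ + ((r:ℂ)-1)*ω₁)^n - (ω₀-ω₁)^n)/r)) := by
        have hpt : ∀ x ∈ Finset.univ.erase (0 : ZMod r),
            (if x = 0 then ω₀ else ω₁) *
              (if s - x = 0 then ((ω₀ + ((r:ℂ)-1)*ω₁)^n + ((r:ℂ)-1)*(ω₀-ω₁)^n)/r
                else ((ω₀ + ((r:ℂ)-1)*ω₁)^n - (ω₀-ω₁)^n)/r)
            = ω₁ * (((ω₀ + ((r:ℂ)-1)*ω₁)^n - (ω₀-ω₁)^n)/r) := by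
          intro x hx
          have hx0 : x ≠ 0 := Finset.ne_of_mem_erase hx
          have hsx : ¬ (s - x = 0) := by
            rw [hs, sub_eq_zero]
            exact fun h => hx0 h.symm
          simp [hx0, hsx]
        rw [Finset.sum_congr rfl hpt, Finset.sum_const, nsmul_eq_mul,
          Finset.card_erase_of_mem (Finset.mem_univ _), hcardU,
          Nat.cast_sub (by omega : 1 ≤ r), Nat.cast_one]
      have h0 : (if (0:ZMod r) = 0 then ω₀ else ω₁) *
          (if s - 0 = 0 then ((ω₀ + ((r:ℂ)-1)*ω₁)^n + ((r:ℂ)-1)*(ω₀-ω₁)^n)/r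
            else ((ω₀ + ((r:ℂ)-1)*ω₁)^n - (ω₀-ω₁)^n)/r)
          = ω₀ * (((ω₀ + ((r:ℂ)-1)*ω₁)^n + ((r:ℂ)-1)*(ω₀-ω₁)^n)/r) := by
        simp [hs]
      rw [h1, h0, if_pos hs]
      field_simp
      ring
    · have hsmem : s ∈ Finset.univ.erase (0 : ZMod r) :=
        Finset.mem_erase.mpr ⟨hs, Finset.mem_univ s⟩
      rw [← Finset.sum_erase_add _ _ hsmem]
      have h2 : (∑ x ∈ (Finset.univ.erase (0 : ZMod r)).erase s,
          (if x = 0 then ω₀ else ω₁) *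
            (if s - x = 0 then ((ω₀ + ((r:ℂ)-1)*ω₁)^n + ((r:ℂ)-1)*(ω₀-ω₁)^n)/r
              else ((ω₀ + ((r:ℂ)-1)*ω₁)^n - (ω₀-ω₁)^n)/r))
          = ((r : ℂ) - 2) * (ω₁ * (((ω₀ + ((r:ℂ)-1)*ω₁)^n - (ω₀-ω₁)^n)/r)) := by
        have hpt : ∀ x ∈ (Finset.univ.erase (0 : ZMod r)).erase s,
            (if x = 0 then ω₀ else ω₁) *
              (if s - x = 0 then ((ω₀ + ((r:ℂ)-1)*ω₁)^n + ((r:ℂ)-1)*(ω₀-ω₁)^n)/r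
                else ((ω₀ + ((r:ℂ)-1)*ω₁)^n - (ω₀-ω₁)^n)/r)
            = ω₁ * (((ω₀ + ((r:ℂ)-1)*ω₁)^n - (ω₀-ω₁)^n)/r) := by
          intro x hx
          have hxs : x ≠ s := Finset.ne_of_mem_erase hx
          have hx0 : x ≠ 0 := Finset.ne_of_mem_erase (Finset.mem_of_mem_erase hx)
          have hsx : ¬ (s - x = 0) := by
            rw [sub_eq_zero]
            exact fun h => hxs h.symm
          simp [hx0, hsx]
        rw [Finset.sum_congr rfl hpt, Finset.sum_const, nsmul_eq_mul,
          Finset.card_erase_of_mem hsmem, Finset.card_erase_of_mem (Finset.mem_univ _), hcardU]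
        rw [show r - 1 - 1 = r - 2 from by omega, Nat.cast_sub (by omega : 2 ≤ r)]
        push_cast
        ring
      have h3 : (if s = 0 then ω₀ else ω₁) *
          (if s - s = 0 then ((ω₀ + ((r:ℂ)-1)*ω₁)^n + ((r:ℂ)-1)*(ω₀-ω₁)^n)/r
            else ((ω₀ + ((r:ℂ)-1)*ω₁)^n - (ω₀-ω₁)^n)/r)
          = ω₁ * (((ω₀ + ((r:ℂ)-1)*ω₁)^n + ((r:ℂ)-1)*(ω₀-ω₁)^n)/r) := by
        simp [hs]
      have h4 : (if (0:ZMod r) = 0 then ω₀ else ω₁) *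
          (if s - 0 = 0 then ((ω₀ + ((r:ℂ)-1)*ω₁)^n + ((r:ℂ)-1)*(ω₀-ω₁)^n)/r
            else ((ω₀ + ((r:ℂ)-1)*ω₁)^n - (ω₀-ω₁)^n)/r)
          = ω₀ * (((ω₀ + ((r:ℂ)-1)*ω₁)^n - (ω₀-ω₁)^n)/r) := by
        simp [hs]
      rw [h2, h3, h4, if_neg hs]
      field_simp
      ring

lemma alt_to_plain (r : ℕ) [NeZero r] (ω₀ ω₁ : ℂ) (ℓ : ℕ) (s : ZMod r) :
    (∑ i : Fin ℓ → ZMod r, if alt ℓ i = s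
        then ∏ j : Fin ℓ, (if i j = 0 then ω₀ else ω₁) else 0)
      = ∑ i : Fin ℓ → ZMod r, if (∑ j : Fin ℓ, i j) = s
        then ∏ j : Fin ℓ, (if i j = 0 then ω₀ else ω₁) else 0 := by
  have hu : ∀ j : ℕ, IsUnit ((-1 : ZMod r) ^ j) := fun j => (isUnit_one.neg).pow j
  have hinv : Function.Involutive
      (fun (i : Fin ℓ → ZMod r) => fun j => (-1 : ZMod r) ^ (j : ℕ) * i j) := by
    intro i
    funext j
    show (-1 : ZMod r) ^ (j:ℕ) * ((-1 : ZMod r) ^ (j:ℕ) * i j) = i j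
    rw [← mul_assoc, ← pow_add, ← two_mul, pow_mul, neg_one_sq, one_pow, one_mul]
  refine Fintype.sum_equiv (Function.Involutive.toPerm _ hinv) _ _ fun i => ?_
  have h1 : (∑ j : Fin ℓ, (Function.Involutive.toPerm _ hinv i) j) = alt ℓ i := rfl
  have h2 : (∏ j : Fin ℓ, if (Function.Involutive.toPerm _ hinv i) j = 0 then ω₀ else ω₁)
      = ∏ j : Fin ℓ, if i j = 0 then ω₀ else ω₁ := by
    refine Finset.prod_congr rfl fun j _ => ?_
    have : ((-1 : ZMod r) ^ (j:ℕ) * i j = 0) ↔ (i j = 0) := (hu (j:ℕ)).mul_right_eq_zero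
    simp only [Function.Involutive.coe_toPerm]
    exact if_congr this rfl rfl
  rw [← h1, ← h2]

end DihedralProofAux

/-- Weighted enumeration of reflection factorizations of the
Coxeter elements `ρ₁, ρ₋₁` of the dihedral group `I₂(r) = G(r,r,2)` (`r ≥ 3`),
with the weight system of the parabolic tower `{1} ≤ {1,t₀} ≤ W`: for every
`ℓ ≥ 0` the weighted number of length-`ℓ` factorizations equals
`(1/r)·(1+(−1)^ℓ)·((ω₀+(r−1)ω₁)^ℓ − (ω₀−ω₁)^ℓ)`. -/
theorem dihedral_weighted_factorizations
    (r : ℕ) (hr : 3 ≤ r) (ω₀ ω₁ : ℂ)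
    (w : DihedralGroup r → ℂ)
    (hw0 : w (sr 0) = ω₀)
    (hw1 : ∀ i : ZMod r, i ≠ 0 → w (sr i) = ω₁)
    (ℓ : ℕ) :
    (∑ᶠ p ∈ {p : (Fin ℓ → DihedralGroup r) × DihedralGroup r |
        (∀ j, ∃ i : ZMod r, p.1 j = sr i) ∧
          (p.2 = DihedralGroup.r 1 ∨ p.2 = DihedralGroup.r (-1)) ∧
          (List.ofFn p.1).prod = p.2},
        ∏ j, w (p.1 j))
      = (1 / (r : ℂ)) * (1 + (-1 : ℂ) ^ ℓ) *
          (((ω₀ + ((r : ℂ) - 1) * ω₁) ^ ℓ) - ((ω₀ - ω₁) ^ ℓ)) := by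
  classical
  haveI : NeZero r := ⟨by omega⟩
  haveI : Fact (1 < r) := ⟨by omega⟩
  open DihedralProofAux in
  have hfin : ({p : (Fin ℓ → DihedralGroup r) × DihedralGroup r |
        (∀ j, ∃ i : ZMod r, p.1 j = sr i) ∧
          (p.2 = DihedralGroup.r 1 ∨ p.2 = DihedralGroup.r (-1)) ∧
          (List.ofFn p.1).prod = p.2}).Finite := Set.toFinite _
  rw [← hfin.coe_toFinset, finsum_mem_coe_finset]
  by_cases hev : Even ℓ
  · -- even case
    have hbij : (∑ p ∈ hfin.toFinset, ∏ j, w (p.1 j))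
        = ∑ i ∈ Finset.univ.filter
            (fun i : Fin ℓ → ZMod r =>
              DihedralProofAux.alt ℓ i = -1 ∨ DihedralProofAux.alt ℓ i = 1),
            ∏ j, (if i j = 0 then ω₀ else ω₁) := by
      refine Finset.sum_nbij' (fun p => fun j => DihedralProofAux.unsr (p.1 j))
        (fun i => (fun j => sr (i j), DihedralGroup.r (-(DihedralProofAux.alt ℓ i))))
        ?_ ?_ ?_ ?_ ?_
      · intro p hp
        rw [Set.Finite.mem_toFinset] at hp
        obtain ⟨h1, h2, h3⟩ := hp
        have hfun : p.1 = fun j => sr (DihedralProofAux.unsr (p.1 j)) := by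
          funext j
          obtain ⟨a, ha⟩ := h1 j
          rw [ha]
          rfl
        rw [hfun, DihedralProofAux.prod_sr_eq, if_pos hev] at h3
        simp only [Finset.mem_filter, Finset.mem_univ, true_and]
        rcases h2 with h | h <;> rw [h] at h3
        · left
          have h' : -(DihedralProofAux.alt ℓ fun j => DihedralProofAux.unsr (p.1 j)) = 1 := by
            simpa using h3
          linear_combination -h'
        · right
          have h' : -(DihedralProofAux.alt ℓ fun j => DihedralProofAux.unsr (p.1 j)) = -1 := by
            simpa using h3
          linear_combination -h'
      · intro i hi
        rw [Finset.mem_filter] at hi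
        rw [Set.Finite.mem_toFinset]
        refine ⟨fun j => ⟨i j, rfl⟩, ?_, ?_⟩
        · rcases hi.2 with h | h <;> rw [h]
          · left
            rw [neg_neg]
          · right
            rfl
        · rw [DihedralProofAux.prod_sr_eq, if_pos hev]
      · intro p hp
        rw [Set.Finite.mem_toFinset] at hp
        obtain ⟨h1, h2, h3⟩ := hp
        have hfun : p.1 = fun j => sr (DihedralProofAux.unsr (p.1 j)) := by
          funext j
          obtain ⟨a, ha⟩ := h1 j
          rw [ha]
          rfl
        have hprod : (List.ofFn p.1).prod
            = DihedralGroup.r (-(DihedralProofAux.alt ℓ fun j => DihedralProofAux.unsr (p.1 j))) := by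
          conv_lhs => rw [hfun]
          rw [DihedralProofAux.prod_sr_eq, if_pos hev]
        ext : 1
        · exact hfun.symm
        · rw [← h3, hprod]
      · intro i _
        funext j
        rfl
      · intro p hp
        rw [Set.Finite.mem_toFinset] at hp
        obtain ⟨h1, _, _⟩ := hp
        dsimp only
        refine Finset.prod_congr rfl fun j _ => ?_
        obtain ⟨a, ha⟩ := h1 j
        simp only [ha]
        show w (sr a) = if DihedralProofAux.unsr (sr a) = 0 then ω₀ else ω₁
        by_cases haz : a = 0
        · subst haz
          simp [DihedralProofAux.unsr, hw0]
        · rw [hw1 a haz]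
          simp [DihedralProofAux.unsr, haz]
    rw [hbij, Finset.sum_filter]
    have hne11 : ((-1 : ZMod r)) ≠ 1 := by
      intro h
      have h2 : ((2:ℕ) : ZMod r) = 0 := by
        push_cast
        linear_combination -h
      have hdvd := (ZMod.natCast_eq_zero_iff 2 r).mp h2
      have := Nat.le_of_dvd (by norm_num) hdvd
      omega
    have hsplit : ∀ i : Fin ℓ → ZMod r,
        (if DihedralProofAux.alt ℓ i = -1 ∨ DihedralProofAux.alt ℓ i = 1
          then ∏ j, (if i j = 0 then ω₀ else ω₁) else 0)
        = (if DihedralProofAux.alt ℓ i = -1 then ∏ j, (if i j = 0 then ω₀ else ω₁) else 0)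
          + (if DihedralProofAux.alt ℓ i = 1 then ∏ j, (if i j = 0 then ω₀ else ω₁) else 0) := by
      intro i
      by_cases hA : DihedralProofAux.alt ℓ i = -1
      · have hB : ¬ DihedralProofAux.alt ℓ i = 1 := fun hB => hne11 (hA.symm.trans hB)
        rw [if_pos (Or.inl hA), if_pos hA, if_neg hB, add_zero]
      · by_cases hB : DihedralProofAux.alt ℓ i = 1
        · rw [if_pos (Or.inr hB), if_neg hA, if_pos hB, zero_add]
        · rw [if_neg (by tauto), if_neg hA, if_neg hB, add_zero]
    rw [Finset.sum_congr rfl (fun i _ => hsplit i), Finset.sum_add_distrib,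
      DihedralProofAux.alt_to_plain r ω₀ ω₁ ℓ (-1), DihedralProofAux.alt_to_plain r ω₀ ω₁ ℓ 1,
      DihedralProofAux.conv_eval r hr ω₀ ω₁ ℓ (-1), DihedralProofAux.conv_eval r hr ω₀ ω₁ ℓ 1]
    have h10 : ((1 : ZMod r)) ≠ 0 := one_ne_zero
    have hm10 : ((-1 : ZMod r)) ≠ 0 := neg_ne_zero.mpr h10
    rw [if_neg hm10, if_neg h10, Even.neg_one_pow hev]
    have hr0 : (r : ℂ) ≠ 0 := Nat.cast_ne_zero.mpr (NeZero.ne r)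
    field_simp
  · -- odd case: the index set is empty
    have hempty : hfin.toFinset = ∅ := by
      ext p
      simp only [Set.Finite.mem_toFinset, Set.mem_setOf_eq, Finset.notMem_empty, iff_false]
      rintro ⟨h1, h2, h3⟩
      have hfun : p.1 = fun j => sr (DihedralProofAux.unsr (p.1 j)) := by
        funext j
        obtain ⟨a, ha⟩ := h1 j
        rw [ha]
        rfl
      rw [hfun, DihedralProofAux.prod_sr_eq, if_neg hev] at h3
      rcases h2 with h | h <;> rw [h] at h3 <;> cases h3
    rw [hempty, Finset.sum_empty, Odd.neg_one_pow (Nat.not_even_iff_odd.mp hev)]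
    ring
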